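/- (Pilot Gram matrix property) Let x ∈ ℂ^B with |x_b|² = p for all b, δ ≥ 0, κ ≥ 0, and define X ∈ ℂ^{B×B} by X_{bb} = p(1+κ²) and X_{b₁b₂} = x_{b₁}\overline{x_{b₂}} e^{-δ|b₁-b₂|/2} for b₁ ≠ b₂. Then X is Hermitian positive semidefinite. -/

import Mathlib

namespace PilotAux

noncomputable def m (r : ℝ) (i k : ℕ) : ℝ :=
  if k = 0 then r ^ i else if k ≤ i then Real.sqrt (1 - r ^ 2) * r ^ (i - k) else 0

lemma key {r : ℝ} (hr0 : 0 < r) (hr1 : r ≤ 1) {i j B : ℕ} (hji : j ≤ i) (hiB : i < B) :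
    ∑ k ∈ Finset.range B, m r i k * m r j k = r ^ (i - j) := by
  have hs : Real.sqrt (1 - r ^ 2) ^ 2 = 1 - r ^ 2 := Real.sq_sqrt (by nlinarith)
  have hsub : ∑ k ∈ Finset.range B, m r i k * m r j k
      = ∑ k ∈ Finset.range (j + 1), m r i k * m r j k := by
    symm
    apply Finset.sum_subset (Finset.range_subset_range.mpr (by omega))
    intro k hk hk'
    simp only [Finset.mem_range] at hk hk'
    have h1 : ¬ k = 0 := by omega
    have h2 : ¬ k ≤ j := by omega
    simp [m, h1, h2]
  rw [hsub, Finset.sum_range_succ']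
  set f : ℕ → ℝ := fun k => r ^ (i + j - 2 * k) with hf
  have hterm : ∀ k ∈ Finset.range j, m r i (k + 1) * m r j (k + 1) = f (k + 1) - f k := by
    intro k hk
    simp only [Finset.mem_range] at hk
    have hki : k + 1 ≤ i := by omega
    have hkj : k + 1 ≤ j := by omega
    have e1 : (i - (k + 1)) + (j - (k + 1)) = i + j - 2 * (k + 1) := by omega
    have e2 : i + j - 2 * k = (i + j - 2 * (k + 1)) + 2 := by omega
    simp only [m, Nat.succ_ne_zero, if_false, hki, hkj, if_true, hf]
    have hs' : Real.sqrt (1 - r ^ 2) * Real.sqrt (1 - r ^ 2) = 1 - r ^ 2 :=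
      Real.mul_self_sqrt (by nlinarith)
    have lhs : Real.sqrt (1 - r ^ 2) * r ^ (i - (k + 1)) * (Real.sqrt (1 - r ^ 2) * r ^ (j - (k + 1)))
        = (1 - r ^ 2) * r ^ (i + j - 2 * (k + 1)) := by
      rw [show Real.sqrt (1 - r ^ 2) * r ^ (i - (k + 1)) * (Real.sqrt (1 - r ^ 2) * r ^ (j - (k + 1)))
          = (Real.sqrt (1 - r ^ 2) * Real.sqrt (1 - r ^ 2)) * (r ^ (i - (k + 1)) * r ^ (j - (k + 1)))
          from by ring, hs', ← pow_add, e1]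
    rw [lhs, e2, pow_add]
    ring
  rw [Finset.sum_congr rfl hterm, Finset.sum_range_sub f j]
  have h0 : m r i 0 * m r j 0 = r ^ (i + j) := by simp [m, pow_add]
  have hfj : f j = r ^ (i - j) := by simp only [hf]; congr 1; omega
  have hf0 : f 0 = r ^ (i + j) := by simp [hf]
  rw [h0, hfj, hf0]; ring

end PilotAux

open Matrix
open scoped ComplexOrder

/-- The pilot Gram matrix `X` with `X_{bb} = p(1+κ²)` and
`X_{b₁b₂} = x_{b₁} conj(x_{b₂}) e^{-δ|b₁-b₂|/2}` for `b₁ ≠ b₂`, where `|x_b|² = p`,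
is Hermitian positive semidefinite. -/
theorem pilot_gram_posSemidef
    (B : ℕ) (x : Fin B → ℂ) (p δ κ : ℝ)
    (hx : ∀ b, ‖x b‖ ^ 2 = p) (hδ : 0 ≤ δ) (hκ : 0 ≤ κ) :
    (Matrix.of fun b₁ b₂ : Fin B =>
        if b₁ = b₂ then ((p * (1 + κ ^ 2) : ℝ) : ℂ)
        else x b₁ * star (x b₂)
          * ((Real.exp (-δ * |(b₁ : ℝ) - (b₂ : ℝ)| / 2) : ℝ) : ℂ)).PosSemidef := by
  rcases Nat.eq_zero_or_pos B with hB | hB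
  · subst hB
    constructor
    · ext i j; exact i.elim0
    · intro y; rw [Subsingleton.elim y 0]; simp
  · have hp : 0 ≤ p := by rw [← hx ⟨0, hB⟩]; positivity
    set r := Real.exp (-δ / 2) with hrdef
    have hr0 : 0 < r := Real.exp_pos _
    have hr1 : r ≤ 1 := by
      rw [hrdef, show (1 : ℝ) = Real.exp 0 by simp]
      exact Real.exp_le_exp.mpr (by linarith)
    set N : Matrix (Fin B) (Fin B) ℂ :=
      Matrix.of (fun i k : Fin B => x i * ((PilotAux.m r (i : ℕ) (k : ℕ) : ℝ) : ℂ)) with hN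
    have hmul0 : ∀ a b : Fin B, (N * Nᴴ) a b
        = x a * star (x b)
          * ((∑ k ∈ Finset.range B, PilotAux.m r (a : ℕ) k * PilotAux.m r (b : ℕ) k : ℝ) : ℂ) := by
      intro a b
      rw [Matrix.mul_apply]
      rw [show ((∑ k ∈ Finset.range B, PilotAux.m r (a : ℕ) k * PilotAux.m r (b : ℕ) k : ℝ) : ℂ)
          = ∑ k ∈ Finset.range B, ((PilotAux.m r (a : ℕ) k * PilotAux.m r (b : ℕ) k : ℝ) : ℂ)
          from by push_cast; rfl]
      rw [Finset.mul_sum, ← Fin.sum_univ_eq_sum_range]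
      refine Finset.sum_congr rfl fun k _ => ?_
      simp only [hN, Matrix.conjTranspose_apply, Matrix.of_apply, star_mul', Complex.star_def,
        Complex.conj_ofReal]
      push_cast
      ring
    have hmul : ∀ a b : Fin B, (b : ℕ) ≤ (a : ℕ) → (N * Nᴴ) a b
        = x a * star (x b) * ((r ^ ((a : ℕ) - (b : ℕ)) : ℝ) : ℂ) := by
      intro a b hba
      rw [hmul0, PilotAux.key hr0 hr1 hba a.isLt]
    have hexp : ∀ a b : Fin B, (b : ℕ) ≤ (a : ℕ) →
        Real.exp (-δ * |(a : ℝ) - (b : ℝ)| / 2) = r ^ ((a : ℕ) - (b : ℕ)) := by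
      intro a b hba
      have hnn : (0 : ℝ) ≤ ((a : ℕ) : ℝ) - ((b : ℕ) : ℝ) :=
        sub_nonneg.mpr (Nat.cast_le.mpr hba)
      have habs : |(a : ℝ) - (b : ℝ)| = (((a : ℕ) - (b : ℕ) : ℕ) : ℝ) := by
        rw [abs_of_nonneg hnn, Nat.cast_sub hba]
      rw [habs, hrdef, ← Real.exp_nat_mul]
      congr 1; ring
    have hX : (Matrix.of fun b₁ b₂ : Fin B =>
        if b₁ = b₂ then ((p * (1 + κ ^ 2) : ℝ) : ℂ)
        else x b₁ * star (x b₂)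
          * ((Real.exp (-δ * |(b₁ : ℝ) - (b₂ : ℝ)| / 2) : ℝ) : ℂ))
        = N * Nᴴ + ((p * κ ^ 2 : ℝ) : ℂ) • 1 := by
      ext i j
      rw [Matrix.add_apply, Matrix.smul_apply, Matrix.one_apply, Matrix.of_apply]
      by_cases hij : i = j
      · subst hij
        rw [if_pos rfl, if_pos rfl, hmul i i le_rfl, Nat.sub_self, pow_zero, Complex.ofReal_one,
          mul_one, smul_eq_mul, mul_one, Complex.star_def, Complex.mul_conj, ← Complex.sq_norm,
          hx i]
        push_cast; ring
      · rw [if_neg hij, if_neg hij, smul_eq_mul, mul_zero, add_zero]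
        rcases le_total (j : ℕ) (i : ℕ) with h | h
        · rw [hmul i j h, hexp i j h]
        · have hsym : (N * Nᴴ) i j = star ((N * Nᴴ) j i) := by
            conv_lhs => rw [← Matrix.isHermitian_mul_conjTranspose_self N]
            rw [Matrix.conjTranspose_apply]
          rw [hsym, hmul j i h, abs_sub_comm, hexp j i h]
          simp only [star_mul', Complex.star_def, Complex.conj_ofReal, RingHom.map_mul,
            Complex.conj_conj]
          ring
    have h1 : (((p * κ ^ 2 : ℝ) : ℂ) • (1 : Matrix (Fin B) (Fin B) ℂ)).PosSemidef := by
      have : (((p * κ ^ 2 : ℝ) : ℂ) • (1 : Matrix (Fin B) (Fin B) ℂ))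
          = ((((Real.sqrt (p * κ ^ 2) : ℝ) : ℂ)) • (1 : Matrix (Fin B) (Fin B) ℂ))ᴴ
            * (((Real.sqrt (p * κ ^ 2) : ℝ) : ℂ) • (1 : Matrix (Fin B) (Fin B) ℂ)) := by
        rw [Matrix.conjTranspose_smul, Matrix.conjTranspose_one, Matrix.smul_mul,
          Matrix.mul_smul, Matrix.one_mul, smul_smul]
        congr 1
        rw [Complex.star_def, Complex.conj_ofReal, ← Complex.ofReal_mul,
          Real.mul_self_sqrt (by positivity)]
      rw [this]
      exact Matrix.posSemidef_conjTranspose_mul_self _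
    rw [hX]
    exact (Matrix.posSemidef_self_mul_conjTranspose N).add h1
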